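/- In QH_α, the relation σ_k · σ_λ = (α q)^{(k + |λ| − |λ↓1|)/n} · σ_{λ↓1} holds for every partition λ ⊆ m×k, where λ↓1 = λ↑(n−1) is the inverse Seidel shift; concretely λ↓1 = (λ₁−1,...,λ_m−1) if λ_m > 0, and (k, λ₁, ..., λ_{m−1}) if λ_m = 0. -/

import Mathlib

/-- The sequence `c = (c_1, …, c_m, 0, 0, …)` of variables of `S = ℚ[c_1, …, c_m]`,
with `c_0 = 1` and `c_i = 0` for `i < 0` or `i > m`. -/
noncomputable def cVar (m : ℕ) : ℤ → MvPolynomial (Fin m) ℚ := fun i =>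
  if h : 1 ≤ i ∧ i ≤ (m : ℤ) then MvPolynomial.X ⟨(i - 1).toNat, by omega⟩
  else if i = 0 then 1 else 0

/-- `σ_p = Δ_{(1^p)}(c) = det(c_{1+j-i})_{p×p}`, extended by `σ_p = 0` for `p < 0`. -/
noncomputable def sigmaP (m : ℕ) : ℤ → MvPolynomial (Fin m) ℚ := fun p =>
  if p < 0 then 0
  else Matrix.det (Matrix.of fun i j : Fin p.toNat => cVar m (1 + (j : ℤ) - (i : ℤ)))

/-- `σ_λ = Δ_λ(σ) = det(σ_{λ_i+j-i})`. -/
noncomputable def sigmaL (m : ℕ) {l : ℕ} (lam : Fin l → ℕ) : MvPolynomial (Fin m) ℚ :=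
  Matrix.det (Matrix.of fun i j : Fin l => sigmaP m ((lam i : ℤ) + (j : ℤ) - (i : ℤ)))

/-- The deformed quantum ring `QH_α = S[q]/⟨σ_{k+1}, …, σ_{n-1}, σ_n + (-1)^m α q⟩`
is the quotient of `Polynomial (MvPolynomial (Fin m) ℚ)` by this ideal. -/
noncomputable def qhIdeal (m k : ℕ) (α : ℚ) :
    Ideal (Polynomial (MvPolynomial (Fin m) ℚ)) :=
  Ideal.span
    ((fun p : ℤ => Polynomial.C (sigmaP m p)) '' Set.Icc ((k : ℤ) + 1) ((m : ℤ) + k - 1) ∪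
      {Polynomial.C (sigmaP m ((m : ℤ) + k)) +
        (-1) ^ m * Polynomial.C (MvPolynomial.C α) * Polynomial.X})

/-- The Seidel shift `λ↑1` of a partition `λ ⊆ m × k`. -/
def upShift (m k : ℕ) (hm : 0 < m) (lam : Fin m → ℕ) : Fin m → ℕ :=
  if lam ⟨0, hm⟩ < k then fun i => lam i + 1
  else fun i => if h : (i : ℕ) + 1 < m then lam ⟨(i : ℕ) + 1, h⟩ else 0

/-- The inverse Seidel shift `λ↓1` of a partition `λ ⊆ m × k`:
`(λ_1 - 1, …, λ_m - 1)` if `λ_m > 0`, and `(k, λ_1, …, λ_{m-1})` if `λ_m = 0`. -/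
def downShift (m k : ℕ) (hm : 0 < m) (lam : Fin m → ℕ) : Fin m → ℕ :=
  if lam ⟨m - 1, Nat.sub_lt hm Nat.one_pos⟩ = 0 then
    fun i => if (i : ℕ) = 0 then k
      else lam ⟨(i : ℕ) - 1, Nat.lt_of_le_of_lt (Nat.sub_le _ _) i.isLt⟩
  else fun i => lam i - 1

noncomputable def Mmat (m p : ℕ) : Matrix (Fin p) (Fin p) (MvPolynomial (Fin m) ℚ) :=
  Matrix.of fun i j => cVar m (1 + (j : ℤ) - (i : ℤ))
lemma cVar_zero (m : ℕ) : cVar m 0 = 1 := by simp [cVar]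
lemma cVar_eq_zero (m : ℕ) {i : ℤ} (h : i < 0 ∨ (m:ℤ) < i) : cVar m i = 0 := by
  unfold cVar; rw [dif_neg (by omega), if_neg (by omega)]
lemma sigmaP_natCast (m p : ℕ) : sigmaP m (p : ℤ) = (Mmat m p).det := by
  unfold sigmaP; rw [if_neg (by omega)]; rfl
lemma sigmaP_neg (m : ℕ) {p : ℤ} (h : p < 0) : sigmaP m p = 0 := by
  unfold sigmaP; rw [if_pos h]
lemma sigmaP_zero (m : ℕ) : sigmaP m 0 = 1 := by
  have := sigmaP_natCast m 0; simpa [Matrix.det_fin_zero] using this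

noncomputable def Nmat (m : ℕ) (t : ℤ) (p : ℕ) : Matrix (Fin p) (Fin p) (MvPolynomial (Fin m) ℚ) :=
  Matrix.of fun i j => if (i:ℕ) = 0 then cVar m (t+1+j) else cVar m (1+(j:ℤ)-(i:ℤ))

lemma Nmat_apply (m : ℕ) (t : ℤ) (p : ℕ) (i j : Fin p) :
    Nmat m t p i j = if (i:ℕ) = 0 then cVar m (t+1+j) else cVar m (1+(j:ℤ)-(i:ℤ)) := rfl

lemma succAbove_one_val {p : ℕ} (r : Fin (p+1)) :
    ((Fin.succAbove 1 r : Fin (p+2)) : ℕ) = if (r:ℕ) = 0 then 0 else (r:ℕ)+1 := by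
  rcases Nat.eq_zero_or_pos (r:ℕ) with h|h
  · rw [if_pos h, Fin.succAbove_of_castSucc_lt]
    · simpa using h
    · simp [Fin.lt_def, h]
  · rw [if_neg (by omega), Fin.succAbove_of_le_castSucc]
    · simp
    · rw [Fin.le_def]; simp only [Fin.coe_castSucc, Fin.val_one]; omega

lemma det_Nmat (m : ℕ) : ∀ (p : ℕ) (t : ℤ), (Nmat m t (p+1)).det =
    ∑ j ∈ Finset.range (p+1), (-1)^j * cVar m (t+1+j) * sigmaP m ((p:ℤ) - j) := by
  intro p
  induction p with
  | zero =>
    intro t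
    simp [Matrix.det_fin_one, Nmat, sigmaP_zero]
  | succ p ih =>
    intro t
    rw [Matrix.det_succ_column_zero, Fin.sum_univ_succ, Fin.sum_univ_succ]
    have hz : ∀ i : Fin p, (-1:MvPolynomial (Fin m) ℚ)^((i.succ.succ : Fin (p+1+1)):ℕ) *
        (Nmat m t (p+1+1)) i.succ.succ 0 *
        ((Nmat m t (p+1+1)).submatrix (Fin.succAbove i.succ.succ) Fin.succ).det = 0 := by
      intro i
      have : (Nmat m t (p+1+1)) i.succ.succ 0 = 0 := by
        rw [Nmat_apply, if_neg (by simp)]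
        exact cVar_eq_zero m (by left; simp; omega)
      rw [this]; ring
    rw [Finset.sum_congr rfl (fun i _ => hz i), Finset.sum_const_zero, add_zero]
    have h0 : (Nmat m t (p+1+1)).submatrix (Fin.succAbove 0) Fin.succ = Mmat m (p+1) := by
      refine Matrix.ext fun r s => ?_
      rw [Matrix.submatrix_apply, Fin.succAbove_zero, Nmat_apply, if_neg (by simp)]
      show cVar m _ = cVar m _
      congr 1
      push_cast [Fin.val_succ]
      ring
    have h1 : (Nmat m t (p+1+1)).submatrix ((Fin.succ 0).succAbove) Fin.succ
        = Nmat m (t+1) (p+1) := by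
      refine Matrix.ext fun r s => ?_
      rw [Matrix.submatrix_apply, Fin.succ_zero_eq_one, Nmat_apply, Nmat_apply]
      have hv := succAbove_one_val (p := p) r
      by_cases h : (r:ℕ) = 0
      · rw [if_pos h] at hv
        rw [if_pos hv, if_pos h]
        congr 1
        push_cast [Fin.val_succ]
        ring
      · rw [if_neg h] at hv
        rw [if_neg (by omega), if_neg h]
        congr 1
        rw [hv]
        push_cast [Fin.val_succ]
        ring
    have e00 : (Nmat m t (p+1+1)) 0 0 = cVar m (t+1) := by
      rw [Nmat_apply, if_pos (show ((0:Fin (p+1+1)):ℕ) = 0 from rfl)]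
      congr 1
      simp
    have e10 : (Nmat m t (p+1+1)) (Fin.succ 0) 0 = 1 := by
      rw [Nmat_apply, if_neg (by simp)]
      have : (1 + ((0: Fin (p+1+1)):ℤ) - ((Fin.succ 0 : Fin (p+1+1)):ℤ)) = 0 := by
        push_cast [Fin.val_succ]
        simp
      rw [this, cVar_zero]
    rw [h0, h1, e00, e10, ih (t+1), ← sigmaP_natCast]
    conv_rhs => rw [Finset.sum_range_succ']
    rw [Finset.mul_sum]
    have hcong : ∀ j ∈ Finset.range (p+1),
        (-1:MvPolynomial (Fin m) ℚ)^((Fin.succ (0 : Fin (p+1)) : Fin (p+1+1)):ℕ) * 1 *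
        ((-1)^j * cVar m (t+1+1+(j:ℤ)) * sigmaP m ((p:ℤ) - (j:ℤ))) =
        (-1)^(j+1) * cVar m (t + 1 + ((j+1 : ℕ):ℤ)) * sigmaP m (((p+1:ℕ):ℤ) - ((j+1:ℕ):ℤ)) := by
      intro j _
      have h1 : ((Fin.succ (0 : Fin (p+1)) : Fin (p+1+1)):ℕ) = 1 := rfl
      have h2 : (t+1+1+(j:ℤ)) = t + 1 + ((j+1 : ℕ):ℤ) := by push_cast; ring
      have h3 : ((p:ℤ) - (j:ℤ)) = ((p+1:ℕ):ℤ) - ((j+1:ℕ):ℤ) := by push_cast; ring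
      rw [h1, h2, h3]; ring
    rw [Finset.sum_congr rfl hcong]
    have h4 : ((0:Fin (p+1+1)):ℕ) = 0 := rfl
    simp only [h4, Nat.cast_zero, add_zero, sub_zero, pow_zero, one_mul]
    ring

lemma Nmat_zero_eq (m p : ℕ) : Nmat m 0 p = Mmat m p := by
  refine Matrix.ext fun i j => ?_
  rw [Nmat_apply]
  by_cases h : (i:ℕ) = 0
  · rw [if_pos h]
    show cVar m _ = cVar m _
    congr 1
    have : ((i:ℤ)) = 0 := by omega
    rw [this]; ring
  · rw [if_neg h]; rfl

lemma sigmaP_eq_sum (m : ℕ) (q : ℕ) : sigmaP m ((q:ℤ)+1) =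
    ∑ j ∈ Finset.range (q+1), (-1)^j * cVar m (1+j) * sigmaP m ((q:ℤ) - j) := by
  have h1 : ((q:ℤ)+1) = ((q+1 : ℕ):ℤ) := by push_cast; ring
  rw [h1, sigmaP_natCast, ← Nmat_zero_eq, det_Nmat]
  refine Finset.sum_congr rfl fun j _ => ?_
  norm_num

lemma sigma_rec (m : ℕ) (p : ℤ) (hp : 1 ≤ p) :
    ∑ i ∈ Finset.range (m+1), (-1:MvPolynomial (Fin m) ℚ)^i * cVar m i * sigmaP m (p - i) = 0 := by
  set R := MvPolynomial (Fin m) ℚ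
  obtain ⟨q, hq⟩ : ∃ q : ℕ, p = (q:ℤ) + 1 := ⟨(p-1).toNat, by omega⟩
  subst hq
  rw [Finset.sum_range_succ']
  simp only [pow_zero, Nat.cast_zero, cVar_zero, one_mul, mul_one, sub_zero]
  rw [sigmaP_eq_sum]
  set g : ℕ → R := fun j => (-1)^j * cVar m (1+j) * sigmaP m ((q:ℤ) - j) with hg
  have hbig : ∀ N₁ N₂ : ℕ, N₁ ≤ N₂ →
      (∀ j, N₁ ≤ j → g j = 0) → ∑ j ∈ Finset.range N₁, g j = ∑ j ∈ Finset.range N₂, g j := by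
    intro N₁ N₂ h hz
    refine Finset.sum_subset (Finset.range_subset_range.2 h) fun j _ hj => ?_
    exact hz j (by simpa using hj)
  have hz1 : ∀ j, q+1 ≤ j → g j = 0 := by
    intro j hj
    have : sigmaP m ((q:ℤ) - j) = 0 := sigmaP_neg m (by omega)
    rw [hg]; dsimp only; rw [this]; ring
  have hz2 : ∀ j, m ≤ j → g j = 0 := by
    intro j hj
    have : cVar m (1+(j:ℤ)) = 0 := cVar_eq_zero m (by right; omega)
    rw [hg]; dsimp only; rw [this]; ring
  have e1 : ∑ j ∈ Finset.range (q+1), g j = ∑ j ∈ Finset.range (q+1+m), g j :=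
    hbig _ _ (by omega) hz1
  have e2 : ∑ j ∈ Finset.range m, g j = ∑ j ∈ Finset.range (q+1+m), g j :=
    hbig _ _ (by omega) hz2
  have hcong : ∀ i ∈ Finset.range m,
      (-1:R)^(i+1) * cVar m ((i+1:ℕ):ℤ) * sigmaP m ((q:ℤ)+1 - ((i+1:ℕ):ℤ)) = - g i := by
    intro i _
    rw [hg]; dsimp only
    have h1 : ((i+1:ℕ):ℤ) = 1 + i := by push_cast; ring
    have h2 : ((q:ℤ)+1 - ((i+1:ℕ):ℤ)) = (q:ℤ) - i := by push_cast; ring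
    rw [h2, h1]
    ring
  rw [Finset.sum_congr rfl hcong, Finset.sum_neg_distrib, e1, e2]
  ring

lemma det_vanish (m : ℕ) (mu : Fin (m+1) → ℤ) (hmu : ∀ i : Fin (m+1), 1 ≤ mu i + (m:ℤ) - (i:ℕ)) :
    (Matrix.of fun i j : Fin (m+1) => sigmaP m (mu i + (j:ℕ) - (i:ℕ))).det = 0 := by
  set R := MvPolynomial (Fin m) ℚ
  set A : Matrix (Fin (m+1)) (Fin (m+1)) R :=
    Matrix.of fun i j : Fin (m+1) => sigmaP m (mu i + (j:ℕ) - (i:ℕ)) with hA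
  set c : Fin (m+1) → R := fun i => (-1)^(m - (i:ℕ)) * cVar m ((m - (i:ℕ) : ℕ)) with hc
  have hcol : ∀ k, (∑ i, c i • A k i) = 0 := by
    intro k
    set F : ℕ → R := fun j => (-1)^(m-j) * cVar m ((m-j : ℕ)) * sigmaP m (mu k + (j:ℕ) - (k:ℕ))
      with hF
    have h1 : ∀ i : Fin (m+1), c i • A k i = F (i:ℕ) := by
      intro i
      rw [hc, hF, hA]
      dsimp only [Matrix.of_apply]
      rw [smul_eq_mul]
    rw [Finset.sum_congr rfl (fun i _ => h1 i), Fin.sum_univ_eq_sum_range,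
      ← Finset.sum_range_reflect]
    have h2 : ∀ j ∈ Finset.range (m+1), F (m+1-1-j) =
        (-1:R)^j * cVar m (j:ℕ) * sigmaP m ((mu k + (m:ℤ) - (k:ℕ)) - (j:ℕ)) := by
      intro j hj
      have hjm : j ≤ m := by simpa using Nat.lt_succ_iff.mp (Finset.mem_range.mp hj)
      rw [hF]
      dsimp only
      have e1 : m+1-1-j = m - j := by omega
      have e2 : m - (m - j) = j := by omega
      have e3 : (mu k + ((m - j : ℕ):ℤ) - (k:ℕ)) = (mu k + (m:ℤ) - (k:ℕ)) - (j:ℕ) := by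
        push_cast [Nat.cast_sub hjm]
        ring
      rw [e1, e2, e3]
    rw [Finset.sum_congr rfl h2]
    exact sigma_rec m _ (hmu k)
  have hdet := Matrix.det_updateCol_sum A (Fin.last m) c
  rw [show (fun k => ∑ i, c i • A k i) = (fun _ => (0:R)) from funext hcol] at hdet
  have hzero : (A.updateCol (Fin.last m) (fun _ => (0:R))).det = 0 :=
    Matrix.det_eq_zero_of_column_eq_zero (Fin.last m)
      (fun i => by rw [Matrix.updateCol_self])
  rw [hzero] at hdet
  have hclast : c (Fin.last m) = 1 := by
    rw [hc]
    dsimp only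
    rw [Fin.val_last, Nat.sub_self]
    simp [cVar_zero]
  rw [hclast, one_smul] at hdet
  exact hdet.symm

lemma mk_sigma_mid (m k : ℕ) (α : ℚ) (p : ℤ) (h1 : (k:ℤ)+1 ≤ p) (h2 : p ≤ (m:ℤ)+k-1) :
    Ideal.Quotient.mk (qhIdeal m k α) (Polynomial.C (sigmaP m p)) = 0 := by
  rw [Ideal.Quotient.eq_zero_iff_mem]
  apply Ideal.subset_span
  left
  exact ⟨p, Set.mem_Icc.2 ⟨h1, h2⟩, rfl⟩

lemma mk_sigma_top (m k : ℕ) (α : ℚ) :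
    Ideal.Quotient.mk (qhIdeal m k α) (Polynomial.C (sigmaP m ((m:ℤ)+k))) =
      - ((-1)^m * Ideal.Quotient.mk (qhIdeal m k α)
          (Polynomial.C (MvPolynomial.C α) * Polynomial.X)) := by
  have hmem : (Polynomial.C (sigmaP m ((m : ℤ) + k)) +
      (-1) ^ m * Polynomial.C (MvPolynomial.C α) * Polynomial.X) ∈ qhIdeal m k α := by
    apply Ideal.subset_span
    right
    rfl
  rw [← Ideal.Quotient.eq_zero_iff_mem] at hmem
  rw [map_add] at hmem
  have := eq_neg_of_add_eq_zero_left hmem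
  rw [this]
  rw [mul_assoc, map_mul, map_pow, map_neg, map_one]

set_option maxHeartbeats 1000000 in
lemma main_alg (m' k : ℕ) (hk : 0 < k) (α : ℚ) (lam : Fin (m'+1) → ℕ)
    (hanti : ∀ i j : Fin (m'+1), i ≤ j → lam j ≤ lam i) (hbound : ∀ i, lam i ≤ k) :
    Ideal.Quotient.mk (qhIdeal (m'+1) k α)
        (Polynomial.C (sigmaP (m'+1) (k:ℤ) * sigmaL (m'+1) lam)) =
      (Ideal.Quotient.mk (qhIdeal (m'+1) k α)
          (Polynomial.C (MvPolynomial.C α) * Polynomial.X)) ^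
        ((k + (∑ i, lam i) - ∑ i, downShift (m'+1) k (Nat.succ_pos m') lam i) / (m'+1 + k)) *
      Ideal.Quotient.mk (qhIdeal (m'+1) k α)
        (Polynomial.C (sigmaL (m'+1) (downShift (m'+1) k (Nat.succ_pos m') lam))) := by
  set mkq := Ideal.Quotient.mk (qhIdeal (m'+1) k α) with hmkq
  set t : Polynomial (MvPolynomial (Fin (m'+1)) ℚ) ⧸ qhIdeal (m'+1) k α :=
    mkq (Polynomial.C (MvPolynomial.C α) * Polynomial.X) with ht
  set mu : Fin (m'+1+1) → ℤ := fun i =>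
    if (i:ℕ) = 0 then (k:ℤ) else ((lam ⟨(i:ℕ)-1, by omega⟩ : ℕ) : ℤ) with hmu
  set A : Matrix (Fin (m'+1+1)) (Fin (m'+1+1)) (MvPolynomial (Fin (m'+1)) ℚ) :=
    Matrix.of fun i j : Fin (m'+1+1) => sigmaP (m'+1) (mu i + (j:ℕ) - (i:ℕ)) with hA
  have hmusucc : ∀ i : Fin (m'+1), mu i.succ = ((lam i : ℕ) : ℤ) := by
    intro i
    rw [hmu]
    dsimp only
    rw [if_neg (by simp)]
    congr 2
  have hA0 : ∀ j : Fin (m'+1+1), A 0 j = sigmaP (m'+1) ((k:ℤ) + ((j:ℕ):ℤ)) := by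
    intro j
    rw [hA]
    dsimp only [Matrix.of_apply]
    congr 1
  -- the first minor is σ_λ
  have hminor0 : (A.submatrix Fin.succ (Fin.succAbove 0)).det = sigmaL (m'+1) lam := by
    unfold sigmaL
    congr 1
    refine Matrix.ext fun i j => ?_
    rw [Matrix.submatrix_apply, Fin.succAbove_zero, hA]
    dsimp only [Matrix.of_apply, Matrix.of_apply]
    rw [hmusucc i]
    congr 1
    push_cast [Fin.val_succ]
    ring
  -- expansion of det A modulo the ideal
  have hexp : mkq (Polynomial.C A.det) =
      mkq (Polynomial.C (sigmaP (m'+1) (k:ℤ) * sigmaL (m'+1) lam)) +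
      ((-1:Polynomial (MvPolynomial (Fin (m'+1)) ℚ) ⧸ qhIdeal (m'+1) k α)^(m'+1)) *
        mkq (Polynomial.C (sigmaP (m'+1) (((m'+1):ℤ)+k))) *
      mkq (Polynomial.C ((A.submatrix Fin.succ (Fin.succAbove (Fin.last (m'+1)))).det)) := by
    conv_lhs => rw [Matrix.det_succ_row_zero]
    rw [map_sum, map_sum, Fin.sum_univ_succ, Fin.sum_univ_castSucc]
    have hmid : ∀ i : Fin m',
        mkq (Polynomial.C ((-1)^(((i.castSucc.succ : Fin (m'+1+1))):ℕ) * A 0 i.castSucc.succ *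
          (A.submatrix Fin.succ (i.castSucc.succ).succAbove).det)) = 0 := by
      intro i
      have hz : mkq (Polynomial.C (A 0 i.castSucc.succ)) = 0 := by
        rw [hA0]
        apply mk_sigma_mid
        · have := i.isLt
          push_cast [Fin.val_succ, Fin.coe_castSucc]
          omega
        · have := i.isLt
          push_cast [Fin.val_succ, Fin.coe_castSucc]
          omega
      rw [map_mul, map_mul, map_mul, map_mul, hz]
      ring
    rw [Finset.sum_congr rfl (fun i _ => hmid i), Finset.sum_const_zero, zero_add]
    have h0 : mkq (Polynomial.C ((-1)^(((0: Fin (m'+1+1))):ℕ) * A 0 0 *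
        (A.submatrix Fin.succ ((0 : Fin (m'+1+1))).succAbove).det)) =
        mkq (Polynomial.C (sigmaP (m'+1) (k:ℤ) * sigmaL (m'+1) lam)) := by
      congr 1
      rw [hminor0]  -- succAbove 0 matches
      have e1 : ((-1 : MvPolynomial (Fin (m'+1)) ℚ))^(((0: Fin (m'+1+1))):ℕ) = 1 := pow_zero _
      have e2 : A 0 0 = sigmaP (m'+1) (k:ℤ) := by
        rw [hA0]
        congr 1
      rw [e1, e2, one_mul]
    have hlast : mkq (Polynomial.C ((-1)^((((Fin.last m').succ : Fin (m'+1+1))):ℕ) *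
        A 0 (Fin.last m').succ *
        (A.submatrix Fin.succ ((Fin.last m').succ).succAbove).det)) =
        ((-1:Polynomial (MvPolynomial (Fin (m'+1)) ℚ) ⧸ qhIdeal (m'+1) k α)^(m'+1)) *
          mkq (Polynomial.C (sigmaP (m'+1) (((m'+1):ℤ)+k))) *
        mkq (Polynomial.C ((A.submatrix Fin.succ (Fin.succAbove (Fin.last (m'+1)))).det)) := by
      have ev : (((Fin.last m').succ : Fin (m'+1+1)) : ℕ) = m'+1 := by
        rw [Fin.succ_last, Fin.val_last]
      have eA : A 0 (Fin.last m').succ = sigmaP (m'+1) (((m'+1):ℤ)+k) := by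
        rw [hA0]
        congr 1
        rw [ev]
        push_cast
        ring
      rw [eA, ev, Fin.succ_last]
      simp only [map_mul, map_pow, map_neg, map_one]
    rw [h0, hlast]
  have htop : mkq (Polynomial.C (sigmaP (m'+1) (((m'+1):ℤ)+k))) =
      - ((-1:Polynomial (MvPolynomial (Fin (m'+1)) ℚ) ⧸ qhIdeal (m'+1) k α)^(m'+1) * t) := mk_sigma_top (m'+1) k α
  have hsq : ((-1:Polynomial (MvPolynomial (Fin (m'+1)) ℚ) ⧸ qhIdeal (m'+1) k α)^(m'+1)) *
      ((-1:Polynomial (MvPolynomial (Fin (m'+1)) ℚ) ⧸ qhIdeal (m'+1) k α)^(m'+1)) = 1 := by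
    rw [← pow_add, show (m'+1)+(m'+1) = 2*(m'+1) from by ring, pow_mul]
    norm_num
    try exact one_pow _
  by_cases hc0 : lam ⟨m'+1-1, Nat.sub_lt (Nat.succ_pos m') Nat.one_pos⟩ = 0
  · -- bottom row of λ is empty
    have hc : lam (Fin.last m') = 0 := hc0
    have hdown : downShift (m'+1) k (Nat.succ_pos m') lam =
        fun i : Fin (m'+1) => if (i : ℕ) = 0 then k
          else lam ⟨(i : ℕ) - 1, Nat.lt_of_le_of_lt (Nat.sub_le _ _) i.isLt⟩ := by
      unfold downShift
      rw [if_pos hc0]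
    have hmulast : mu (Fin.last (m'+1)) = 0 := by
      rw [← Fin.succ_last, hmusucc, hc]
      simp
    have hdetA : A.det = sigmaL (m'+1) (downShift (m'+1) k (Nat.succ_pos m') lam) := by
      rw [Matrix.det_succ_row A (Fin.last (m'+1)), Fin.sum_univ_castSucc]
      have hmid : ∀ j : Fin (m'+1),
          (-1: MvPolynomial (Fin (m'+1)) ℚ)^(((Fin.last (m'+1)):ℕ) + ((j.castSucc : Fin (m'+1+1)):ℕ)) *
          A (Fin.last (m'+1)) j.castSucc *
          (A.submatrix (Fin.last (m'+1)).succAbove (j.castSucc).succAbove).det = 0 := by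
        intro j
        have : A (Fin.last (m'+1)) j.castSucc = 0 := by
          rw [hA]
          dsimp only [Matrix.of_apply]
          apply sigmaP_neg
          rw [hmulast]
          have := j.isLt
          push_cast [Fin.coe_castSucc, Fin.val_last]
          omega
        rw [this]
        ring
      rw [Finset.sum_congr rfl (fun j _ => hmid j), Finset.sum_const_zero, zero_add]
      have hAll : A (Fin.last (m'+1)) (Fin.last (m'+1)) = 1 := by
        rw [hA]
        dsimp only [Matrix.of_apply]
        have : mu (Fin.last (m'+1)) + (((Fin.last (m'+1)):ℕ):ℤ) - (((Fin.last (m'+1)):ℕ):ℤ)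
            = 0 := by
          rw [hmulast]; ring
        rw [this, sigmaP_zero]
      have hsign : (-1: MvPolynomial (Fin (m'+1)) ℚ)^(((Fin.last (m'+1)):ℕ) + ((Fin.last (m'+1)):ℕ)) = 1 := by
        rw [show ((Fin.last (m'+1)):ℕ) + ((Fin.last (m'+1)):ℕ) = 2*((Fin.last (m'+1)):ℕ) from by ring,
          pow_mul, neg_one_sq, one_pow]
      rw [hAll, hsign]
      simp only [one_mul, mul_one]
      unfold sigmaL
      congr 1
      refine Matrix.ext fun i j => ?_
      rw [Matrix.submatrix_apply, Fin.succAbove_last, hA]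
      dsimp only [Matrix.of_apply]
      rw [hdown]
      dsimp only
      by_cases h : (i:ℕ) = 0
      · have : mu i.castSucc = (k:ℤ) := by
          rw [hmu]; dsimp only
          rw [if_pos (by simpa using h)]
        rw [this, if_pos h]
        all_goals congr 1 <;> (try push_cast [Fin.coe_castSucc]) <;> (try ring)
      · have : mu i.castSucc = ((lam ⟨(i:ℕ)-1, Nat.lt_of_le_of_lt (Nat.sub_le _ _) i.isLt⟩ : ℕ) : ℤ) := by
          rw [hmu]; dsimp only
          rw [if_neg (by simpa using h)]
          simp [Fin.coe_castSucc]
        rw [this, if_neg h]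
        all_goals congr 1 <;> (try push_cast [Fin.coe_castSucc]) <;> (try ring)
    have hminorlast : (A.submatrix Fin.succ (Fin.succAbove (Fin.last (m'+1)))).det = 0 := by
      apply Matrix.det_eq_zero_of_row_eq_zero (Fin.last m')
      intro j
      rw [Matrix.submatrix_apply, Fin.succAbove_last, hA]
      dsimp only [Matrix.of_apply]
      apply sigmaP_neg
      rw [Fin.succ_last, hmulast]
      have := j.isLt
      push_cast [Fin.coe_castSucc, Fin.val_last]
      omega
    have hsumdown : ∑ i, downShift (m'+1) k (Nat.succ_pos m') lam i = k + ∑ i, lam i := by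
      rw [hdown, Fin.sum_univ_succ]
      conv_rhs => rw [Fin.sum_univ_castSucc]
      rw [hc, add_zero]
      congr 1
    have hzero : (k + (∑ i, lam i) - ∑ i, downShift (m'+1) k (Nat.succ_pos m') lam i)
        / (m'+1 + k) = 0 := by
      rw [hsumdown]
      simp
    rw [hzero, pow_zero, one_mul]
    rw [hdetA, hminorlast, map_zero, map_zero] at hexp
    linear_combination -hexp
  · -- all rows of λ nonempty
    have hc : ¬ lam (Fin.last m') = 0 := hc0
    have hge1 : ∀ i, 1 ≤ lam i := by
      intro i
      have := hanti i (Fin.last m') (Fin.le_last i)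
      omega
    have hdown : downShift (m'+1) k (Nat.succ_pos m') lam = fun i => lam i - 1 := by
      unfold downShift
      rw [if_neg hc0]
    have hvan : A.det = 0 := by
      apply det_vanish (m'+1) mu
      intro i
      rw [hmu]
      dsimp only
      by_cases h : (i:ℕ) = 0
      · rw [if_pos h]
        omega
      · rw [if_neg h]
        have := hge1 ⟨(i:ℕ)-1, by omega⟩
        have hi : (i:ℕ) ≤ m'+1 := by omega
        push_cast
        omega
    have hminorlast : (A.submatrix Fin.succ (Fin.succAbove (Fin.last (m'+1)))).det =
        sigmaL (m'+1) (downShift (m'+1) k (Nat.succ_pos m') lam) := by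
      rw [hdown]
      unfold sigmaL
      congr 1
      refine Matrix.ext fun i j => ?_
      rw [Matrix.submatrix_apply, Fin.succAbove_last, hA]
      dsimp only [Matrix.of_apply]
      rw [hmusucc i]
      congr 1
      have h1 := hge1 i
      push_cast [Fin.coe_castSucc, Fin.val_succ, Nat.cast_sub h1]
      ring
    have hsumdown : (∑ i, downShift (m'+1) k (Nat.succ_pos m') lam i) + (m'+1) = ∑ i, lam i := by
      rw [hdown]
      have heach : ∀ i : Fin (m'+1), lam i - 1 + 1 = lam i := fun i => by have := hge1 i; omega
      calc (∑ i, (lam i - 1)) + (m'+1) = ∑ i : Fin (m'+1), (lam i - 1 + 1) := by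
            rw [Finset.sum_add_distrib]
            simp
        _ = ∑ i, lam i := Finset.sum_congr rfl fun i _ => heach i
    have hone : (k + (∑ i, lam i) - ∑ i, downShift (m'+1) k (Nat.succ_pos m') lam i)
        / (m'+1 + k) = 1 := by
      have h1 : (k + (∑ i, lam i) - ∑ i, downShift (m'+1) k (Nat.succ_pos m') lam i)
          = m'+1+k := by omega
      rw [h1, Nat.div_self (by omega)]
    rw [hone, pow_one]
    rw [hvan, map_zero, map_zero, hminorlast, htop] at hexp
    linear_combination -hexp +
      t * mkq (Polynomial.C (sigmaL (m'+1) (downShift (m'+1) k (Nat.succ_pos m') lam))) * hsq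

def pvalid (m k : ℕ) (lam : Fin m → ℕ) : Prop :=
  (∀ i j : Fin m, i ≤ j → lam j ≤ lam i) ∧ (∀ i, lam i ≤ k)

def embF (m k : ℕ) (lam : Fin m → ℕ) : Finset (ZMod (m+k)) :=
  Finset.image (fun i : Fin m => ((lam i + (m - 1 - (i:ℕ)) : ℕ) : ZMod (m+k))) Finset.univ

lemma pvalid_up (m k : ℕ) (hm : 0 < m) (lam : Fin m → ℕ) (hv : pvalid m k lam) :
    pvalid m k (upShift m k hm lam) := by
  obtain ⟨h1, h2⟩ := hv
  unfold upShift
  by_cases h0 : lam ⟨0, hm⟩ < k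
  · rw [if_pos h0]
    constructor
    · intro i j hij
      simp only
      have := h1 i j hij
      omega
    · intro i
      simp only
      have := h1 ⟨0, hm⟩ i (by simp [Fin.le_def])
      omega
  · rw [if_neg h0]
    constructor
    · intro i j hij
      simp only
      by_cases hj : (j:ℕ) + 1 < m
      · rw [dif_pos hj, dif_pos (by have := Fin.le_def.mp hij; omega)]
        exact h1 _ _ (by simp only [Fin.mk_le_mk]; have := Fin.le_def.mp hij; omega)
      · rw [dif_neg hj]
        omega
    · intro i
      simp only
      by_cases hi : (i:ℕ) + 1 < m
      · rw [dif_pos hi]; exact h2 _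
      · rw [dif_neg hi]; omega

lemma pvalid_down (m k : ℕ) (hm : 0 < m) (lam : Fin m → ℕ) (hv : pvalid m k lam) :
    pvalid m k (downShift m k hm lam) := by
  obtain ⟨h1, h2⟩ := hv
  unfold downShift
  by_cases h0 : lam ⟨m - 1, Nat.sub_lt hm Nat.one_pos⟩ = 0
  · rw [if_pos h0]
    constructor
    · intro i j hij
      simp only
      by_cases hi : (i:ℕ) = 0
      · rw [if_pos hi]
        by_cases hj : (j:ℕ) = 0
        · rw [if_pos hj]
        · rw [if_neg hj]; exact h2 _
      · rw [if_neg hi, if_neg (by have := Fin.le_def.mp hij; omega)]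
        exact h1 _ _ (by simp only [Fin.mk_le_mk]; have := Fin.le_def.mp hij; omega)
    · intro i
      simp only
      by_cases hi : (i:ℕ) = 0
      · rw [if_pos hi]
      · rw [if_neg hi]; exact h2 _
  · rw [if_neg h0]
    constructor
    · intro i j hij
      simp only
      have := h1 i j hij
      omega
    · intro i
      simp only
      have := h2 i
      omega

lemma embF_inj (m k : ℕ) (hm : 0 < m) (hk : 0 < k) (lam mu : Fin m → ℕ)
    (hv : pvalid m k lam) (hv' : pvalid m k mu) (h : embF m k lam = embF m k mu) :
    lam = mu := by
  haveI : NeZero (m+k) := ⟨by omega⟩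
  -- natural number versions
  have key : ∀ nu : Fin m → ℕ, pvalid m k nu →
      (embF m k nu).image ZMod.val = Finset.image (fun i : Fin m => nu i + (m - 1 - (i:ℕ))) Finset.univ := by
    intro nu hvnu
    unfold embF
    rw [Finset.image_image]
    refine Finset.image_congr fun i _ => ?_
    show ZMod.val _ = _
    exact ZMod.val_natCast_of_lt (by have := hvnu.2 i; have := i.isLt; omega)
  have hs : Finset.image (fun i : Fin m => lam i + (m - 1 - (i:ℕ))) Finset.univ =
      Finset.image (fun i : Fin m => mu i + (m - 1 - (i:ℕ))) Finset.univ := by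
    rw [← key lam hv, ← key mu hv', h]
  -- strictly monotone reversed enumerations
  have hrev : ∀ i : Fin m, m - 1 - (i:ℕ) < m := fun i => by have := i.isLt; omega
  have gmem : ∀ nu : Fin m → ℕ, ∀ x : Fin m,
      (fun i : Fin m => nu ⟨m - 1 - (i:ℕ), hrev i⟩ + (i:ℕ)) x ∈
      Finset.image (fun i : Fin m => nu i + (m - 1 - (i:ℕ))) Finset.univ := by
    intro nu x
    refine Finset.mem_image.2 ⟨⟨m - 1 - (x:ℕ), hrev x⟩, Finset.mem_univ _, ?_⟩
    have := x.isLt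
    show nu _ + (m - 1 - (m - 1 - (x:ℕ))) = nu _ + (x:ℕ)
    congr 1
    omega
  have gmono : ∀ nu : Fin m → ℕ, pvalid m k nu →
      StrictMono (fun i : Fin m => nu ⟨m - 1 - (i:ℕ), hrev i⟩ + (i:ℕ)) := by
    intro nu hvnu i j hij
    have hij' := Fin.lt_def.mp hij
    have hle : nu ⟨m - 1 - (i:ℕ), hrev i⟩ ≤ nu ⟨m - 1 - (j:ℕ), hrev j⟩ := by
      apply hvnu.1
      simp only [Fin.mk_le_mk]
      omega
    simp only
    omega
  have ginj : ∀ nu : Fin m → ℕ, pvalid m k nu →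
      Function.Injective (fun i : Fin m => nu i + (m - 1 - (i:ℕ))) := by
    intro nu hvnu
    have hlt : ∀ i j : Fin m, i < j → nu j + (m - 1 - (j:ℕ)) < nu i + (m - 1 - (i:ℕ)) := by
      intro i j hij
      have hij' := Fin.lt_def.mp hij
      have := hvnu.1 i j (le_of_lt hij)
      have := j.isLt
      omega
    intro i j hij
    simp only at hij
    by_contra hne
    rcases lt_or_gt_of_ne hne with hl | hl
    · have := hlt i j hl; omega
    · have := hlt j i hl; omega
  have hcard : (Finset.image (fun i : Fin m => lam i + (m - 1 - (i:ℕ))) Finset.univ).card = m := by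
    rw [Finset.card_image_of_injective _ (ginj lam hv), Finset.card_univ, Fintype.card_fin]
  have e1 := Finset.orderEmbOfFin_unique hcard (gmem lam) (gmono lam hv)
  have gmem' : ∀ x : Fin m,
      (fun i : Fin m => mu ⟨m - 1 - (i:ℕ), hrev i⟩ + (i:ℕ)) x ∈
      Finset.image (fun i : Fin m => lam i + (m - 1 - (i:ℕ))) Finset.univ := by
    intro x
    rw [hs]
    exact gmem mu x
  have e2 := Finset.orderEmbOfFin_unique hcard gmem' (gmono mu hv')
  have e3 := e1.trans e2.symm
  funext j
  have hthis := congrFun e3 (⟨m - 1 - (j:ℕ), hrev j⟩ : Fin m)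
  simp only at hthis
  have hj := j.isLt
  have hi : (⟨m - 1 - ((⟨m - 1 - (j:ℕ), hrev j⟩ : Fin m):ℕ),
      hrev ⟨m - 1 - (j:ℕ), hrev j⟩⟩ : Fin m) = j := by
    apply Fin.ext
    show m - 1 - (m - 1 - (j:ℕ)) = (j:ℕ)
    omega
  rw [hi] at hthis
  omega

lemma image_shift (m k : ℕ) (s : Finset (ZMod (m+k))) (a b : ZMod (m+k)) :
    (s.image (· + a)).image (· + b) = s.image (· + (a + b)) := by
  rw [Finset.image_image]
  refine Finset.image_congr fun x _ => ?_
  show x + a + b = x + (a + b)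
  ring

lemma embF_up (m k : ℕ) (hm : 0 < m) (hk : 0 < k) (lam : Fin m → ℕ) (hv : pvalid m k lam) :
    embF m k (upShift m k hm lam) = (embF m k lam).image (· + 1) := by
  unfold embF upShift
  rw [Finset.image_image]
  by_cases h0 : lam ⟨0, hm⟩ < k
  · rw [if_pos h0]
    refine Finset.image_congr fun i _ => ?_
    show ((lam i + 1 + (m - 1 - (i:ℕ)) : ℕ) : ZMod (m+k)) = _ + 1
    push_cast
    ring
  · rw [if_neg h0]
    have hl0 : lam ⟨0, hm⟩ = k := by have := hv.2 ⟨0, hm⟩; omega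
    set π : Fin m → Fin m := fun i => if h : (i:ℕ)+1 < m then (⟨(i:ℕ)+1, h⟩ : Fin m) else ⟨0, hm⟩
      with hπ
    have hsurj : Function.Surjective π := by
      intro j
      by_cases hj : (j:ℕ) = 0
      · refine ⟨⟨m-1, by omega⟩, ?_⟩
        rw [hπ]
        dsimp only
        rw [dif_neg (by simp; omega)]
        exact (Fin.ext hj.symm)
      · refine ⟨⟨(j:ℕ)-1, by omega⟩, ?_⟩
        rw [hπ]
        dsimp only
        rw [dif_pos (by show (j:ℕ)-1+1 < m; omega)]
        exact Fin.ext (by show (j:ℕ)-1+1 = (j:ℕ); omega)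
    conv_rhs => rw [← Finset.image_univ_of_surjective hsurj, Finset.image_image]
    refine Finset.image_congr fun i _ => ?_
    show (((if h : (i:ℕ)+1 < m then lam ⟨(i:ℕ)+1, h⟩ else 0) + (m - 1 - (i:ℕ)) : ℕ) : ZMod (m+k))
      = ((lam (π i) + (m - 1 - ((π i : Fin m):ℕ)) : ℕ) : ZMod (m+k)) + 1
    rw [hπ]
    dsimp only
    by_cases h : (i:ℕ)+1 < m
    · rw [dif_pos h, dif_pos h]
      show _ = ((lam ⟨(i:ℕ)+1, h⟩ + (m - 1 - ((i:ℕ)+1)) : ℕ) : ZMod (m+k)) + 1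
      rw [show m - 1 - (i:ℕ) = (m - 1 - ((i:ℕ)+1)) + 1 from by omega]
      push_cast
      ring
    · rw [dif_neg h, dif_neg h]
      have hi : (i:ℕ) = m - 1 := by have := i.isLt; omega
      show ((0 + (m - 1 - (i:ℕ)) : ℕ) : ZMod (m+k))
        = ((lam ⟨0, hm⟩ + (m - 1 - ((0:ℕ))) : ℕ) : ZMod (m+k)) + 1
      rw [hl0, show (0:ℕ) + (m - 1 - (i:ℕ)) = 0 from by omega,
        show (k + (m - 1 - 0) : ℕ) = m + k - 1 from by omega]
      have : ((m + k - 1 : ℕ) : ZMod (m+k)) + 1 = ((m + k : ℕ) : ZMod (m+k)) := by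
        rw [show m + k = (m + k - 1) + 1 from by omega]
        push_cast
        ring
      rw [this, ZMod.natCast_self]
      simp

lemma embF_down (m k : ℕ) (hm : 0 < m) (hk : 0 < k) (lam : Fin m → ℕ) (hv : pvalid m k lam) :
    embF m k (downShift m k hm lam) = (embF m k lam).image (· + (-1)) := by
  unfold embF downShift
  rw [Finset.image_image]
  by_cases h0 : lam ⟨m - 1, Nat.sub_lt hm Nat.one_pos⟩ = 0
  · rw [if_pos h0]
    set ρ : Fin m → Fin m := fun i => if (i:ℕ) = 0 then ⟨m-1, by omega⟩
      else ⟨(i:ℕ)-1, by have := i.isLt; omega⟩ with hρ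
    have hsurj : Function.Surjective ρ := by
      intro j
      by_cases hj : (j:ℕ) = m - 1
      · refine ⟨⟨0, hm⟩, ?_⟩
        rw [hρ]
        dsimp only
        rw [if_pos rfl]
        exact Fin.ext hj.symm
      · refine ⟨⟨(j:ℕ)+1, by have := j.isLt; omega⟩, ?_⟩
        rw [hρ]
        dsimp only
        rw [if_neg (by simp)]
        exact Fin.ext (by simp)
    conv_rhs => rw [← Finset.image_univ_of_surjective hsurj, Finset.image_image]
    refine Finset.image_congr fun i _ => ?_
    show (((if (i:ℕ) = 0 then k else lam ⟨(i:ℕ)-1, Nat.lt_of_le_of_lt (Nat.sub_le _ _) i.isLt⟩)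
        + (m - 1 - (i:ℕ)) : ℕ) : ZMod (m+k))
      = ((lam (ρ i) + (m - 1 - ((ρ i : Fin m):ℕ)) : ℕ) : ZMod (m+k)) + (-1)
    rw [hρ]
    dsimp only
    by_cases h : (i:ℕ) = 0
    · rw [if_pos h, if_pos h]
      show ((k + (m - 1 - (i:ℕ)) : ℕ) : ZMod (m+k))
        = ((lam ⟨m-1, _⟩ + (m - 1 - (m-1:ℕ)) : ℕ) : ZMod (m+k)) + (-1)
      rw [show lam ⟨m-1, by omega⟩ = 0 from h0, h,
        show (0 + (m - 1 - (m-1)) : ℕ) = 0 from by omega,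
        show (k + (m - 1 - 0) : ℕ) = m + k - 1 from by omega]
      have : ((m + k - 1 : ℕ) : ZMod (m+k)) + 1 = 0 := by
        rw [show ((m + k - 1 : ℕ) : ZMod (m+k)) + 1 = ((m + k - 1 + 1 : ℕ) : ZMod (m+k)) from by
          push_cast; ring, show m + k - 1 + 1 = m + k from by omega, ZMod.natCast_self]
      push_cast
      linear_combination this
    · rw [if_neg h, if_neg h]
      show ((lam ⟨(i:ℕ)-1, _⟩ + (m - 1 - (i:ℕ)) : ℕ) : ZMod (m+k))
        = ((lam ⟨(i:ℕ)-1, _⟩ + (m - 1 - ((i:ℕ)-1)) : ℕ) : ZMod (m+k)) + (-1)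
      rw [show m - 1 - ((i:ℕ)-1) = (m - 1 - (i:ℕ)) + 1 from by have := i.isLt; omega]
      push_cast
      ring
  · rw [if_neg h0]
    have hge1 : ∀ i, 1 ≤ lam i := by
      intro i
      have := hv.1 i ⟨m - 1, Nat.sub_lt hm Nat.one_pos⟩ (by simp [Fin.le_def]; have := i.isLt; omega)
      omega
    refine Finset.image_congr fun i _ => ?_
    show ((lam i - 1 + (m - 1 - (i:ℕ)) : ℕ) : ZMod (m+k))
      = ((lam i + (m - 1 - (i:ℕ)) : ℕ) : ZMod (m+k)) + (-1)
    rw [show lam i + (m - 1 - (i:ℕ)) = (lam i - 1 + (m - 1 - (i:ℕ))) + 1 from by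
      have := hge1 i; omega]
    push_cast
    ring

lemma comb_main (m k : ℕ) (hm : 0 < m) (hk : 0 < k) (lam : Fin m → ℕ)
    (hanti : ∀ i j : Fin m, i ≤ j → lam j ≤ lam i) (hbound : ∀ i, lam i ≤ k) :
    downShift m k hm lam = (upShift m k hm)^[m + k - 1] lam := by
  haveI : NeZero (m+k) := ⟨by omega⟩
  have hv : pvalid m k lam := ⟨hanti, hbound⟩
  have hit : ∀ t, pvalid m k ((upShift m k hm)^[t] lam) ∧
      embF m k ((upShift m k hm)^[t] lam) = (embF m k lam).image (· + ((t:ℕ) : ZMod (m+k))) := by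
    intro t
    induction t with
    | zero =>
      refine ⟨hv, ?_⟩
      simp
    | succ t ih =>
      rw [Function.iterate_succ_apply']
      refine ⟨pvalid_up m k hm _ ih.1, ?_⟩
      rw [embF_up m k hm hk _ ih.1, ih.2, image_shift]
      congr 1
      push_cast
      ring
  have h1 := hit (m+k-1)
  have h2 : ((m+k-1 : ℕ) : ZMod (m+k)) = -1 := by
    have h3 : ((m+k-1 : ℕ) : ZMod (m+k)) + 1 = 0 := by
      rw [show ((m+k-1:ℕ):ZMod (m+k)) + 1 = ((m+k-1+1 : ℕ) : ZMod (m+k)) from by push_cast; ring,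
        show m+k-1+1 = m+k from by omega, ZMod.natCast_self]
    exact eq_neg_of_add_eq_zero_left h3
  apply embF_inj m k hm hk _ _ (pvalid_down m k hm lam hv) h1.1
  rw [embF_down m k hm hk lam hv, h1.2, h2]

/-- In `QH_α` one has `σ_k σ_λ = (α q)^{(k + |λ| - |λ↓1|)/n} σ_{λ↓1}`, where
the inverse Seidel shift satisfies `λ↓1 = λ↑(n-1)`. -/
theorem quantum_pieri_sigmak_seidel (m k : ℕ) (hm : 0 < m) (hk : 0 < k) (α : ℚ)
    (lam : Fin m → ℕ)
    (hanti : ∀ i j : Fin m, i ≤ j → lam j ≤ lam i) (hbound : ∀ i, lam i ≤ k) :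
    Ideal.Quotient.mk (qhIdeal m k α)
        (Polynomial.C (sigmaP m (k : ℤ) * sigmaL m lam)) =
      (Ideal.Quotient.mk (qhIdeal m k α)
          (Polynomial.C (MvPolynomial.C α) * Polynomial.X)) ^
          ((k + (∑ i, lam i) - ∑ i, downShift m k hm lam i) / (m + k)) *
        Ideal.Quotient.mk (qhIdeal m k α)
          (Polynomial.C (sigmaL m (downShift m k hm lam))) ∧
    downShift m k hm lam = (upShift m k hm)^[m + k - 1] lam := by
  obtain ⟨m', rfl⟩ : ∃ m', m = m'+1 := ⟨m-1, by omega⟩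
  constructor
  · exact main_alg m' k hk α lam hanti hbound
  · exact comb_main (m'+1) k hm hk lam hanti hbound
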